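/- arXiv:2604.19602 — 3 statements merged into one kernel-verified Lean document; each statement's English description precedes it below -/
import Mathlib

section
/- Let A, B ∈ M_n be complex positive semidefinite matrices with r = rank(B) ≥ 1, and let c be a real number with 0 < c ≤ μ_{n−r+1}(A)/κ_eff(B). Then the Hermitian matrix C = A − cI satisfies μ_{n−r+1}(C) ≥ −(κ_eff(B) − 1) λ_min(C), and consequently C ∘ B is positive semidefinite. -/
open Matrix
open scoped Matrix ComplexOrder

/-- `mu m A` is the smallest of the eigenvalues of all `m × m` principal submatrices of `A`
(principal submatrices are obtained by selecting the same set of `m` row and column indices). -/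
noncomputable def mu {n : ℕ} (m : ℕ) (A : Matrix (Fin n) (Fin n) ℂ) : ℝ :=
  sInf {t : ℝ | ∃ f : Fin m → Fin n, Function.Injective f ∧
    ∃ h : (A.submatrix f f).IsHermitian, ∃ i : Fin m, t = h.eigenvalues i}

/-- The smallest eigenvalue of a Hermitian matrix. -/
noncomputable def lambdaMin {n : ℕ} {A : Matrix (Fin n) (Fin n) ℂ} (hA : A.IsHermitian) : ℝ :=
  ⨅ i, hA.eigenvalues i

/-- The largest eigenvalue of a Hermitian matrix. -/
noncomputable def lambdaMax {n : ℕ} {A : Matrix (Fin n) (Fin n) ℂ} (hA : A.IsHermitian) : ℝ :=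
  ⨆ i, hA.eigenvalues i

/-- The smallest positive eigenvalue of a Hermitian matrix. -/
noncomputable def lambdaMinPos {n : ℕ} {A : Matrix (Fin n) (Fin n) ℂ} (hA : A.IsHermitian) : ℝ :=
  sInf {t : ℝ | (∃ i, hA.eigenvalues i = t) ∧ 0 < t}

/-- The effective condition number of a positive semidefinite matrix: the ratio of its largest
and smallest positive eigenvalues. -/
noncomputable def kappaEff {n : ℕ} {B : Matrix (Fin n) (Fin n) ℂ} (hB : B.IsHermitian) : ℝ :=
  lambdaMax hB / lambdaMinPos hB

/-- Cauchy–Binet, summed over all (not nec. injective) column selections. -/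
lemma cbf {m n : ℕ} {R : Type*} [CommRing R] (X Y : Matrix (Fin m) (Fin n) R) :
    ∑ φ : Fin m → Fin n, (X.submatrix id φ).det * (Y.submatrix id φ).det
      = (Nat.factorial m : R) * (X * Yᵀ).det := by
  have h1 : ∀ φ : Fin m → Fin n, (X.submatrix id φ).det * (Y.submatrix id φ).det
      = ∑ σ : Equiv.Perm (Fin m), ∑ τ : Equiv.Perm (Fin m),
        (((Equiv.Perm.sign σ : ℤ) : R) * ((Equiv.Perm.sign τ : ℤ) : R)) *
          ∏ j, X (σ j) (φ j) * Y (τ j) (φ j) := by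
    intro φ
    rw [Matrix.det_apply', Matrix.det_apply', Finset.sum_mul_sum]
    refine Finset.sum_congr rfl fun σ _ => Finset.sum_congr rfl fun τ _ => ?_
    rw [Finset.prod_mul_distrib]
    simp only [Matrix.submatrix_apply, id_eq]
    ring
  rw [Finset.sum_congr rfl fun φ _ => h1 φ]
  rw [Finset.sum_comm]
  have h2 : ∀ σ : Equiv.Perm (Fin m),
      ∑ φ : Fin m → Fin n, ∑ τ : Equiv.Perm (Fin m),
        (((Equiv.Perm.sign σ : ℤ) : R) * ((Equiv.Perm.sign τ : ℤ) : R)) *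
          ∏ j, X (σ j) (φ j) * Y (τ j) (φ j) = (X * Yᵀ).det := by
    intro σ
    rw [Finset.sum_comm]
    have h3 : ∀ τ : Equiv.Perm (Fin m),
        ∏ j, (X * Yᵀ) (σ j) (τ j)
          = ∑ φ : Fin m → Fin n, ∏ j, X (σ j) (φ j) * Y (τ j) (φ j) := by
      intro τ
      calc ∏ j, (X * Yᵀ) (σ j) (τ j)
          = ∏ j, ∑ c, X (σ j) c * Y (τ j) c := by
            refine Finset.prod_congr rfl fun j _ => ?_
            rw [Matrix.mul_apply]
            simp [Matrix.transpose_apply]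
        _ = ∑ φ ∈ Fintype.piFinset (fun _ : Fin m => (Finset.univ : Finset (Fin n))),
              ∏ j, X (σ j) (φ j) * Y (τ j) (φ j) :=
            Finset.prod_univ_sum _ _
        _ = ∑ φ : Fin m → Fin n, ∏ j, X (σ j) (φ j) * Y (τ j) (φ j) := by
            rw [Fintype.piFinset_univ]
    calc ∑ τ : Equiv.Perm (Fin m), ∑ φ : Fin m → Fin n,
          (((Equiv.Perm.sign σ : ℤ) : R) * ((Equiv.Perm.sign τ : ℤ) : R)) *
            ∏ j, X (σ j) (φ j) * Y (τ j) (φ j)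
        = ∑ τ : Equiv.Perm (Fin m),
            (((Equiv.Perm.sign σ : ℤ) : R) * ((Equiv.Perm.sign τ : ℤ) : R)) *
            ∏ j, (X * Yᵀ) (σ j) (τ j) := by
          refine Finset.sum_congr rfl fun τ _ => ?_
          rw [h3 τ, Finset.mul_sum]
      _ = (X * Yᵀ).det := by
          rw [← Equiv.sum_comp (Equiv.mulRight σ)]
          have key : ∀ ρ : Equiv.Perm (Fin m),
              (((Equiv.Perm.sign σ : ℤ) : R) * ((Equiv.Perm.sign (ρ * σ) : ℤ) : R)) *
                ∏ j, (X * Yᵀ) (σ j) ((ρ * σ) j)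
              = ((Equiv.Perm.sign ρ : ℤ) : R) * ∏ i, (X * Yᵀ)ᵀ (ρ i) i := by
            intro ρ
            have hs : Equiv.Perm.sign (ρ * σ) = Equiv.Perm.sign ρ * Equiv.Perm.sign σ :=
              map_mul _ _ _
            have hp : ∏ j, (X * Yᵀ) (σ j) ((ρ * σ) j) = ∏ i, (X * Yᵀ)ᵀ (ρ i) i := by
              rw [← Equiv.prod_comp σ (fun i => (X * Yᵀ)ᵀ (ρ i) i)]
              refine Finset.prod_congr rfl fun j _ => ?_
              simp [Matrix.transpose_apply, Equiv.Perm.mul_apply]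
            rw [hs, hp]
            have hsq : ((Equiv.Perm.sign σ : ℤ) : R) * ((Equiv.Perm.sign σ : ℤ) : R) = 1 := by
              rcases Int.units_eq_one_or (Equiv.Perm.sign σ) with h | h <;> rw [h] <;> norm_num
            rw [Units.val_mul]
            push_cast
            calc ((Equiv.Perm.sign σ : ℤ) : R) *
                  (((Equiv.Perm.sign ρ : ℤ) : R) * ((Equiv.Perm.sign σ : ℤ) : R)) *
                  ∏ i, (X * Yᵀ)ᵀ (ρ i) i
                = ((((Equiv.Perm.sign σ : ℤ) : R) * ((Equiv.Perm.sign σ : ℤ) : R)) *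
                    ((Equiv.Perm.sign ρ : ℤ) : R)) * ∏ i, (X * Yᵀ)ᵀ (ρ i) i := by ring
              _ = ((Equiv.Perm.sign ρ : ℤ) : R) * ∏ i, (X * Yᵀ)ᵀ (ρ i) i := by
                  rw [hsq, one_mul]
          simp only [Equiv.coe_mulRight]
          rw [Finset.sum_congr rfl fun ρ _ => key ρ]
          rw [← Matrix.det_apply', Matrix.det_transpose]
  rw [Finset.sum_congr rfl fun σ _ => h2 σ]
  rw [Finset.sum_const]
  simp [Fintype.card_perm, mul_comm]

section Bordered

lemma det_bordered {K : ℕ} {R : Type*} [CommRing R] (M : Matrix (Fin (K+1)) (Fin (K+1)) R)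
    (u v : Fin K → R) (d : R)
    (h11 : ∀ l l' : Fin K, M l.castSucc l'.castSucc = if l = l' then 1 else 0)
    (h12 : ∀ l : Fin K, M l.castSucc (Fin.last K) = u l)
    (h21 : ∀ l' : Fin K, M (Fin.last K) l'.castSucc = v l')
    (h22 : M (Fin.last K) (Fin.last K) = d) :
    M.det = d - ∑ l, v l * u l := by
  have he : M = (Matrix.fromBlocks (1 : Matrix (Fin K) (Fin K) R)
      (Matrix.of fun l (_ : Fin 1) => u l) (Matrix.of fun (_ : Fin 1) l' => v l')
      (Matrix.of fun _ _ => d)).submatrix finSumFinEquiv.symm finSumFinEquiv.symm := by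
    ext i j
    refine Fin.lastCases ?_ (fun l => ?_) i <;> refine Fin.lastCases ?_ (fun l' => ?_) j
    · simp only [Matrix.submatrix_apply, finSumFinEquiv_symm_last, Matrix.fromBlocks_apply₂₂,
        Matrix.of_apply]
      exact h22
    · have : finSumFinEquiv.symm l'.castSucc = Sum.inl l' :=
        finSumFinEquiv_symm_apply_castAdd l'
      simp only [Matrix.submatrix_apply, finSumFinEquiv_symm_last, this,
        Matrix.fromBlocks_apply₂₁, Matrix.of_apply]
      exact h21 l'
    · have : finSumFinEquiv.symm l.castSucc = Sum.inl l :=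
        finSumFinEquiv_symm_apply_castAdd l
      simp only [Matrix.submatrix_apply, finSumFinEquiv_symm_last, this,
        Matrix.fromBlocks_apply₁₂, Matrix.of_apply]
      exact h12 l
    · have hl : finSumFinEquiv.symm l.castSucc = Sum.inl l :=
        finSumFinEquiv_symm_apply_castAdd l
      have hl' : finSumFinEquiv.symm l'.castSucc = Sum.inl l' :=
        finSumFinEquiv_symm_apply_castAdd l'
      simp only [Matrix.submatrix_apply, hl, hl', Matrix.fromBlocks_apply₁₁]
      rw [Matrix.one_apply]
      exact h11 l l'
  rw [he, Matrix.det_submatrix_equiv_self, Matrix.det_fromBlocks_one₁₁]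
  rw [Matrix.det_fin_one]
  simp only [Matrix.sub_apply, Matrix.of_apply, Matrix.mul_apply, Matrix.of_apply]


end Bordered

section Wvec

/-- The "generalized cross product" vector attached to a family `q` and a selection `φ`. -/
noncomputable def wvec {K n : ℕ} (q : Fin K → Fin n → ℂ) (φ : Fin (K+1) → Fin n)
    (s : Fin n) : ℂ :=
  (starRingEnd ℂ)
    (((Matrix.of (Fin.snoc q (fun c => if c = s then (1:ℂ) else 0))).submatrix id φ).det)

lemma wvec_eq_zero {K n : ℕ} (q : Fin K → Fin n → ℂ) (φ : Fin (K+1) → Fin n)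
    (s : Fin n) (h : ∀ j, φ j ≠ s) : wvec q φ s = 0 := by
  unfold wvec
  rw [Matrix.det_eq_zero_of_row_eq_zero (Fin.last K), map_zero]
  intro j
  simp only [Matrix.submatrix_apply, id_eq, Matrix.of_apply, Fin.snoc_last]
  simp [h j]

lemma wvec_sum {K n : ℕ} (q : Fin K → Fin n → ℂ)
    (hq : ∀ l l' : Fin K, ∑ c, (starRingEnd ℂ) (q l c) * q l' c = if l = l' then 1 else 0)
    (s t : Fin n) :
    ∑ φ : Fin (K+1) → Fin n, wvec q φ s * (starRingEnd ℂ) (wvec q φ t)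
      = ((K+1).factorial : ℂ) *
        ((if s = t then (1:ℂ) else 0) - ∑ l, q l s * (starRingEnd ℂ) (q l t)) := by
  set X : Matrix (Fin (K+1)) (Fin n) ℂ :=
    (Matrix.of (Fin.snoc q (fun c => if c = s then (1:ℂ) else 0))).map (starRingEnd ℂ) with hX
  set Y : Matrix (Fin (K+1)) (Fin n) ℂ :=
    Matrix.of (Fin.snoc q (fun c => if c = t then (1:ℂ) else 0)) with hY
  have hterm : ∀ φ : Fin (K+1) → Fin n,
      wvec q φ s * (starRingEnd ℂ) (wvec q φ t)
        = (X.submatrix id φ).det * (Y.submatrix id φ).det := by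
    intro φ
    unfold wvec
    rw [Complex.conj_conj]
    congr 1
    rw [RingHom.map_det, RingHom.mapMatrix_apply, Matrix.submatrix_map]
  rw [Finset.sum_congr rfl fun φ _ => hterm φ, cbf X Y]
  congr 1
  refine det_bordered (X * Yᵀ) (fun l => (starRingEnd ℂ) (q l t)) (fun l' => q l' s)
    (if s = t then 1 else 0) ?_ ?_ ?_ ?_
  · intro l l'
    rw [Matrix.mul_apply, ← hq l l']
    refine Finset.sum_congr rfl fun c _ => ?_
    simp [hX, hY, Matrix.map_apply, Fin.snoc_castSucc]
  · intro l
    rw [Matrix.mul_apply]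
    have : ∀ c, X l.castSucc c * Yᵀ c (Fin.last K)
        = if c = t then (starRingEnd ℂ) (q l c) else 0 := by
      intro c
      simp only [hX, hY, Matrix.map_apply, Matrix.transpose_apply, Matrix.of_apply,
        Fin.snoc_castSucc, Fin.snoc_last]
      split <;> simp
    rw [Finset.sum_congr rfl fun c _ => this c, Finset.sum_ite_eq' Finset.univ t]
    simp
  · intro l'
    rw [Matrix.mul_apply]
    have : ∀ c, X (Fin.last K) c * Yᵀ c l'.castSucc
        = if c = s then q l' c else 0 := by
      intro c
      simp only [hX, hY, Matrix.map_apply, Matrix.transpose_apply, Matrix.of_apply,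
        Fin.snoc_castSucc, Fin.snoc_last]
      split <;> simp
    rw [Finset.sum_congr rfl fun c _ => this c, Finset.sum_ite_eq' Finset.univ s]
    simp
  · rw [Matrix.mul_apply]
    have : ∀ c, X (Fin.last K) c * Yᵀ c (Fin.last K)
        = if c = s then (if c = t then (1:ℂ) else 0) else 0 := by
      intro c
      simp only [hX, hY, Matrix.map_apply, Matrix.transpose_apply, Matrix.of_apply,
        Fin.snoc_last]
      split <;> simp
    rw [Finset.sum_congr rfl fun c _ => this c, Finset.sum_ite_eq' Finset.univ s]
    simp only [Finset.mem_univ, if_true]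

end Wvec

section Core

lemma core' {K n : ℕ} (G : Matrix (Fin n) (Fin n) ℂ) (q : Fin K → Fin n → ℂ)
    (hq : ∀ l l' : Fin K, ∑ c, (starRingEnd ℂ) (q l c) * q l' c = if l = l' then 1 else 0)
    (hloc : ∀ (φ : Fin (K+1) → Fin n) (v : Fin n → ℂ),
      (∀ s, (∀ j, φ j ≠ s) → v s = 0) →
        0 ≤ (dotProduct (star v) (G *ᵥ v)).re) :
    ∑ l, (dotProduct (star (q l)) (G *ᵥ q l)).re ≤ (∑ s, G s s).re := by
  have expand : ∀ v : Fin n → ℂ, dotProduct (star v) (G *ᵥ v)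
      = ∑ s, ∑ t, (starRingEnd ℂ) (v s) * (G s t * v t) := by
    intro v
    simp only [dotProduct, Matrix.mulVec, Pi.star_apply, Complex.star_def,
      Finset.mul_sum]
  set N : ℂ := ((K+1).factorial : ℂ) with hN
  set T : ℂ := ∑ φ : Fin (K+1) → Fin n,
    dotProduct (star (wvec q φ)) (G *ᵥ (wvec q φ)) with hT
  have key : T = N * ((∑ s, G s s) - ∑ l, dotProduct (star (q l)) (G *ᵥ q l)) := by
    calc T = ∑ φ : Fin (K+1) → Fin n, ∑ s, ∑ t,
          (starRingEnd ℂ) (wvec q φ s) * (G s t * wvec q φ t) :=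
        Finset.sum_congr rfl fun φ _ => expand _
      _ = ∑ s, ∑ t, ∑ φ : Fin (K+1) → Fin n,
          (starRingEnd ℂ) (wvec q φ s) * (G s t * wvec q φ t) := by
        rw [Finset.sum_comm]
        exact Finset.sum_congr rfl fun s _ => Finset.sum_comm
      _ = ∑ s, ∑ t, G s t * ∑ φ : Fin (K+1) → Fin n,
          (wvec q φ t * (starRingEnd ℂ) (wvec q φ s)) := by
        refine Finset.sum_congr rfl fun s _ => Finset.sum_congr rfl fun t _ => ?_
        rw [Finset.mul_sum]
        exact Finset.sum_congr rfl fun φ _ => by ring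
      _ = ∑ s, ∑ t, G s t * (N * ((if t = s then (1:ℂ) else 0)
            - ∑ l, q l t * (starRingEnd ℂ) (q l s))) := by
        refine Finset.sum_congr rfl fun s _ => Finset.sum_congr rfl fun t _ => ?_
        rw [wvec_sum q hq t s]
      _ = ∑ s, (N * G s s - N * ∑ t, G s t * ∑ l, q l t * (starRingEnd ℂ) (q l s)) := by
        refine Finset.sum_congr rfl fun s _ => ?_
        have : ∀ t, G s t * (N * ((if t = s then (1:ℂ) else 0)
              - ∑ l, q l t * (starRingEnd ℂ) (q l s)))
            = N * (if t = s then G s t else 0)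
              - N * (G s t * ∑ l, q l t * (starRingEnd ℂ) (q l s)) := by
          intro t
          split <;> ring
        rw [Finset.sum_congr rfl fun t _ => this t, Finset.sum_sub_distrib, ← Finset.mul_sum,
          Finset.sum_ite_eq' Finset.univ s (fun t => G s t), ← Finset.mul_sum]
        simp only [Finset.mem_univ, if_true]
      _ = N * ((∑ s, G s s) - ∑ l, dotProduct (star (q l)) (G *ᵥ q l)) := by
        rw [Finset.sum_sub_distrib, ← Finset.mul_sum, ← Finset.mul_sum, ← mul_sub]
        congr 2
        calc ∑ s, ∑ t, G s t * ∑ l, q l t * (starRingEnd ℂ) (q l s)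
            = ∑ s, ∑ t, ∑ l, (starRingEnd ℂ) (q l s) * (G s t * q l t) := by
              refine Finset.sum_congr rfl fun s _ => Finset.sum_congr rfl fun t _ => ?_
              rw [Finset.mul_sum]
              exact Finset.sum_congr rfl fun l _ => by ring
          _ = ∑ s, ∑ l, ∑ t, (starRingEnd ℂ) (q l s) * (G s t * q l t) :=
              Finset.sum_congr rfl fun s _ => Finset.sum_comm
          _ = ∑ l, ∑ s, ∑ t, (starRingEnd ℂ) (q l s) * (G s t * q l t) :=
              Finset.sum_comm
          _ = ∑ l, dotProduct (star (q l)) (G *ᵥ q l) :=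
              Finset.sum_congr rfl fun l _ => (expand _).symm
  have hTre : 0 ≤ T.re := by
    rw [hT, Complex.re_sum]
    refine Finset.sum_nonneg fun φ _ => ?_
    exact hloc φ (wvec q φ) (fun s hs => wvec_eq_zero q φ s hs)
  rw [key] at hTre
  have hNpos : (0:ℝ) < ((K+1).factorial : ℝ) := by
    exact_mod_cast Nat.factorial_pos _
  have : 0 ≤ ((∑ s, G s s) - ∑ l, dotProduct (star (q l)) (G *ᵥ q l)).re := by
    have h1 : (N * ((∑ s, G s s) - ∑ l, dotProduct (star (q l)) (G *ᵥ q l))).re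
        = ((K+1).factorial : ℝ) *
          ((∑ s, G s s) - ∑ l, dotProduct (star (q l)) (G *ᵥ q l)).re := by
      rw [hN, Complex.mul_re]
      simp
    rw [h1] at hTre
    nlinarith
  rw [Complex.sub_re, Complex.re_sum, Complex.re_sum] at this
  rw [Complex.re_sum]
  linarith

section Rayleigh

lemma rayleigh_lower {m : ℕ} {N : Matrix (Fin m) (Fin m) ℂ} (hN : N.IsHermitian) {μ : ℝ}
    (h : ∀ i, μ ≤ hN.eigenvalues i) (y : Fin m → ℂ) :
    μ * (dotProduct (star y) y).re ≤ (dotProduct (star y) (N *ᵥ y)).re := by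
  set U : Matrix (Fin m) (Fin m) ℂ := (hN.eigenvectorUnitary : Matrix (Fin m) (Fin m) ℂ) with hU
  set g : Fin m → ℂ := (star U) *ᵥ y with hg
  have key : ∀ M : Matrix (Fin m) (Fin m) ℂ,
      dotProduct (star y) ((U * M * star U) *ᵥ y)
        = dotProduct (star g) (M *ᵥ g) := by
    intro M
    rw [hg, ← Matrix.mulVec_mulVec, ← Matrix.mulVec_mulVec,
      Matrix.dotProduct_mulVec (star y) U _]
    congr 1
    rw [Matrix.star_mulVec, Matrix.star_eq_conjTranspose, Matrix.conjTranspose_conjTranspose]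
  have h1 : dotProduct (star y) (N *ᵥ y)
      = dotProduct (star g) ((Matrix.diagonal (RCLike.ofReal ∘ hN.eigenvalues)) *ᵥ g) := by
    conv_lhs => rw [hN.spectral_theorem]
    exact key _
  have h2 : (dotProduct (star g) ((Matrix.diagonal (RCLike.ofReal ∘ hN.eigenvalues)) *ᵥ g)).re
      = ∑ i, hN.eigenvalues i * Complex.normSq (g i) := by
    rw [dotProduct, Complex.re_sum]
    refine Finset.sum_congr rfl fun i _ => ?_
    rw [Matrix.mulVec_diagonal]
    have e : star g i * ((RCLike.ofReal ∘ hN.eigenvalues) i * g i)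
        = ((hN.eigenvalues i : ℝ) : ℂ) * ((Complex.normSq (g i) : ℝ) : ℂ) := by
      rw [Complex.normSq_eq_conj_mul_self]
      simp only [Function.comp_apply, Pi.star_apply, Complex.star_def]
      have : RCLike.ofReal (hN.eigenvalues i) = ((hN.eigenvalues i : ℝ) : ℂ) := rfl
      rw [this]
      ring
    rw [e, ← Complex.ofReal_mul, Complex.ofReal_re]
  have h3 : (dotProduct (star y) y).re = ∑ i, Complex.normSq (g i) := by
    have e1 : dotProduct (star y) y
        = dotProduct (star y) ((U * 1 * star U) *ᵥ y) := by
      rw [mul_one, Matrix.mem_unitaryGroup_iff.mp (hN.eigenvectorUnitary).2, Matrix.one_mulVec]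
    rw [e1, key 1, Matrix.one_mulVec, dotProduct, Complex.re_sum]
    refine Finset.sum_congr rfl fun i _ => ?_
    rw [Pi.star_apply, Complex.star_def, ← Complex.normSq_eq_conj_mul_self, Complex.ofReal_re]
  rw [h1, h2, h3, Finset.mul_sum]
  refine Finset.sum_le_sum fun i _ => ?_
  exact mul_le_mul_of_nonneg_right (h i) (Complex.normSq_nonneg _)

lemma quadform_restrict {m n : ℕ} (M : Matrix (Fin n) (Fin n) ℂ) {ψ : Fin m → Fin n}
    (hψ : Function.Injective ψ) (w : Fin n → ℂ) (hw : ∀ s, s ∉ Set.range ψ → w s = 0) :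
    dotProduct (star w) (M *ᵥ w)
      = dotProduct (star (w ∘ ψ)) ((M.submatrix ψ ψ) *ᵥ (w ∘ ψ)) := by
  have hsum : ∀ (v : Fin n → ℂ), (∀ s, s ∉ Set.range ψ → v s = 0) →
      ∑ s, v s = ∑ i, v (ψ i) := by
    intro v hv
    have himg : ∑ x ∈ Finset.univ.image ψ, v x = ∑ i, v (ψ i) :=
      Finset.sum_image (fun x _ y _ hxy => hψ hxy)
    rw [← himg]
    refine (Finset.sum_subset (Finset.subset_univ _) fun s _ hs => hv s fun hmem => ?_).symm
    rcases hmem with ⟨i, hi⟩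
    exact hs (Finset.mem_image.mpr ⟨i, Finset.mem_univ i, hi⟩)
  have inner : ∀ s, (M *ᵥ w) s = ∑ j, M s (ψ j) * w (ψ j) := by
    intro s
    have : ∀ t, (fun t => M s t * w t) t = 0 ∨ t ∈ Set.range ψ := by
      intro t
      by_cases ht : t ∈ Set.range ψ
      · exact Or.inr ht
      · exact Or.inl (by simp only []; rw [hw t ht, mul_zero])
    exact hsum (fun t => M s t * w t) (fun t ht => by
      rcases this t with h | h
      · exact h
      · exact absurd h ht)
  calc dotProduct (star w) (M *ᵥ w)
      = ∑ s, star (w s) * (M *ᵥ w) s := rfl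
    _ = ∑ i, star (w (ψ i)) * (M *ᵥ w) (ψ i) :=
        hsum _ (fun s hs => by rw [hw s hs, star_zero, zero_mul])
    _ = ∑ i, star (w (ψ i)) * ∑ j, M (ψ i) (ψ j) * w (ψ j) :=
        Finset.sum_congr rfl fun i _ => by rw [inner]
    _ = dotProduct (star (w ∘ ψ)) ((M.submatrix ψ ψ) *ᵥ (w ∘ ψ)) := rfl

end Rayleigh

section Helpers

lemma quad_sub_smul {n : ℕ} (M : Matrix (Fin n) (Fin n) ℂ) (c : ℝ) (v : Fin n → ℂ) :
    dotProduct (star v) ((M - (c:ℂ) • 1) *ᵥ v)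
      = dotProduct (star v) (M *ᵥ v) - (c:ℂ) * dotProduct (star v) v := by
  rw [Matrix.sub_mulVec, dotProduct_sub]
  congr 1
  rw [Matrix.smul_mulVec, Matrix.one_mulVec, dotProduct_smul]
  rfl

lemma dot_self_re {n : ℕ} (v : Fin n → ℂ) :
    (dotProduct (star v) v).re = ∑ t, Complex.normSq (v t) := by
  rw [dotProduct, Complex.re_sum]
  refine Finset.sum_congr rfl fun t _ => ?_
  rw [Pi.star_apply, Complex.star_def, ← Complex.normSq_eq_conj_mul_self, Complex.ofReal_re]

lemma dot_self_re_nonneg {n : ℕ} (v : Fin n → ℂ) : 0 ≤ (dotProduct (star v) v).re := by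
  rw [dot_self_re]
  exact Finset.sum_nonneg fun t _ => Complex.normSq_nonneg _

lemma submatrix_one_inj {m n : ℕ} {ψ : Fin m → Fin n} (hψ : Function.Injective ψ) :
    (1 : Matrix (Fin n) (Fin n) ℂ).submatrix ψ ψ = 1 := by
  ext i j
  simp [Matrix.submatrix_apply, Matrix.one_apply, hψ.eq_iff]

lemma evec_unit {m : ℕ} {N : Matrix (Fin m) (Fin m) ℂ} (hN : N.IsHermitian) (i : Fin m) :
    dotProduct (star ⇑(hN.eigenvectorBasis i)) ⇑(hN.eigenvectorBasis i) = 1 := by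
  rw [dotProduct_comm, ← EuclideanSpace.inner_eq_star_dotProduct, inner_self_eq_norm_sq_to_K,
    hN.eigenvectorBasis.orthonormal.1 i]
  norm_num

/-- membership bound for `mu` -/
lemma mu_bddBelow {n m : ℕ} (A : Matrix (Fin n) (Fin n) ℂ) :
    BddBelow {t : ℝ | ∃ f : Fin m → Fin n, Function.Injective f ∧
      ∃ h : (A.submatrix f f).IsHermitian, ∃ i : Fin m, t = h.eigenvalues i} := by
  classical
  set g : ((Fin m → Fin n) × Fin m) → ℝ := fun p =>
    if h : (A.submatrix p.1 p.1).IsHermitian then h.eigenvalues p.2 else 0 with hg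
  have hsub : {t : ℝ | ∃ f : Fin m → Fin n, Function.Injective f ∧
      ∃ h : (A.submatrix f f).IsHermitian, ∃ i : Fin m, t = h.eigenvalues i} ⊆ Set.range g := by
    rintro t ⟨f, _, h, i, rfl⟩
    exact ⟨(f, i), by simp [hg, dif_pos h]⟩
  exact ((Set.finite_range g).subset hsub).bddBelow

lemma mu_le {n m : ℕ} (A : Matrix (Fin n) (Fin n) ℂ) {f : Fin m → Fin n}
    (hf : Function.Injective f) (h : (A.submatrix f f).IsHermitian) (i : Fin m) :
    mu m A ≤ h.eigenvalues i :=
  csInf_le (mu_bddBelow A) ⟨f, hf, h, i, rfl⟩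

lemma quadform_submatrix_ge_mu {n m : ℕ} {A : Matrix (Fin n) (Fin n) ℂ} (hA : A.IsHermitian)
    {ψ : Fin m → Fin n} (hψ : Function.Injective ψ) (y : Fin m → ℂ) :
    mu m A * (dotProduct (star y) y).re
      ≤ (dotProduct (star y) ((A.submatrix ψ ψ) *ᵥ y)).re :=
  rayleigh_lower (hA.submatrix ψ) (fun i => mu_le A hψ (hA.submatrix ψ) i) y

lemma diag_congr {n : ℕ} (x v : Fin n → ℂ) (M : Matrix (Fin n) (Fin n) ℂ) :
    dotProduct (star v) ((Matrix.diagonal (star x) * M * Matrix.diagonal x) *ᵥ v)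
      = dotProduct (star (x * v)) (M *ᵥ (x * v)) := by
  simp only [dotProduct, Matrix.mulVec, Matrix.diagonal_mul, Matrix.mul_diagonal,
    Pi.star_apply, Pi.mul_apply, Complex.star_def, Finset.mul_sum, _root_.map_mul]
  refine Finset.sum_congr rfl fun s _ => ?_
  refine Finset.sum_congr rfl fun t _ => ?_
  ring

end Helpers

section Expand

lemma sub_smul_submatrix {m n : ℕ} (M : Matrix (Fin n) (Fin n) ℂ) (c : ℝ)
    {f : Fin m → Fin n} (hf : Function.Injective f) :
    (M - (c:ℂ) • 1).submatrix f f = M.submatrix f f - (c:ℂ) • 1 := by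
  ext i j
  by_cases hij : i = j
  · subst hij
    simp [Matrix.submatrix_apply, Matrix.sub_apply, Matrix.smul_apply, Matrix.one_apply]
  · have hfij : f i ≠ f j := fun h => hij (hf h)
    simp [Matrix.submatrix_apply, Matrix.sub_apply, Matrix.smul_apply, Matrix.one_apply,
      hij, hfij]

lemma hadamard_expand {n : ℕ} (C B : Matrix (Fin n) (Fin n) ℂ) (hB : B.IsHermitian)
    (x : Fin n → ℂ) :
    dotProduct (star x) ((Matrix.hadamard C B) *ᵥ x)
      = ∑ k, ((hB.eigenvalues k : ℝ) : ℂ) *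
          dotProduct
            (star (x * fun t => star ((hB.eigenvectorUnitary : Matrix (Fin n) (Fin n) ℂ) t k)))
            (C *ᵥ (x * fun t => star ((hB.eigenvectorUnitary : Matrix (Fin n) (Fin n) ℂ) t k))) := by
  set U : Matrix (Fin n) (Fin n) ℂ := (hB.eigenvectorUnitary : Matrix (Fin n) (Fin n) ℂ) with hU
  have hBentry : ∀ s t, B s t
      = ∑ k, U s k * (((hB.eigenvalues k : ℝ) : ℂ) * (starRingEnd ℂ) (U t k)) := by
    intro s t
    conv_lhs => rw [hB.spectral_theorem, Unitary.conjStarAlgAut_apply]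
    rw [Matrix.mul_apply]
    refine Finset.sum_congr rfl fun k _ => ?_
    rw [Matrix.mul_diagonal, Matrix.star_apply]
    have : (RCLike.ofReal ∘ hB.eigenvalues) k = ((hB.eigenvalues k : ℝ) : ℂ) := rfl
    rw [this, Complex.star_def]
    ring
  calc dotProduct (star x) ((Matrix.hadamard C B) *ᵥ x)
      = ∑ s, ∑ t, ∑ k, (starRingEnd ℂ) (x s) *
          (C s t * (U s k * (((hB.eigenvalues k : ℝ) : ℂ) * (starRingEnd ℂ) (U t k))) * x t) := by
        simp only [dotProduct, Matrix.mulVec, Matrix.hadamard_apply, Pi.star_apply,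
          Complex.star_def, Finset.mul_sum]
        refine Finset.sum_congr rfl fun s _ => Finset.sum_congr rfl fun t _ => ?_
        rw [hBentry s t, Finset.mul_sum, Finset.sum_mul, Finset.mul_sum]
    _ = ∑ k, ∑ s, ∑ t, (starRingEnd ℂ) (x s) *
          (C s t * (U s k * (((hB.eigenvalues k : ℝ) : ℂ) * (starRingEnd ℂ) (U t k))) * x t) := by
        calc ∑ s, ∑ t, ∑ k, (starRingEnd ℂ) (x s) *
              (C s t * (U s k * (((hB.eigenvalues k : ℝ) : ℂ) * (starRingEnd ℂ) (U t k))) * x t)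
            = ∑ s, ∑ k, ∑ t, (starRingEnd ℂ) (x s) *
              (C s t * (U s k * (((hB.eigenvalues k : ℝ) : ℂ) * (starRingEnd ℂ) (U t k))) * x t) :=
              Finset.sum_congr rfl fun s _ => Finset.sum_comm
          _ = ∑ k, ∑ s, ∑ t, (starRingEnd ℂ) (x s) *
              (C s t * (U s k * (((hB.eigenvalues k : ℝ) : ℂ) * (starRingEnd ℂ) (U t k))) * x t) :=
              Finset.sum_comm
    _ = ∑ k, ((hB.eigenvalues k : ℝ) : ℂ) *
          dotProduct (star (x * fun t => star (U t k))) (C *ᵥ (x * fun t => star (U t k))) := by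
        refine Finset.sum_congr rfl fun k _ => ?_
        simp only [dotProduct, Matrix.mulVec, Pi.star_apply, Pi.mul_apply,
          Complex.star_def, Finset.mul_sum, _root_.map_mul, Complex.conj_conj]
        refine Finset.sum_congr rfl fun s _ => Finset.sum_congr rfl fun t _ => by ring

end Expand

/-- **Remark.** For positive semidefinite `A, B` with `r = rank B ≥ 1` and
`0 < c ≤ μ_{n-r+1}(A)/κ_eff(B)`, the Hermitian matrix `C = A - c I` satisfies
`μ_{n-r+1}(C) ≥ -(κ_eff(B) - 1) λ_min(C)`, and consequently `C ⊙ B` is positive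
semidefinite. -/
theorem stmt_11 {n : ℕ} (A B : Matrix (Fin n) (Fin n) ℂ)
    (hA : A.PosSemidef) (hB : B.PosSemidef) (r : ℕ) (hr : r = B.rank) (hr1 : 1 ≤ r)
    (c : ℝ) (hc0 : 0 < c) (hc1 : c ≤ mu (n - r + 1) A / kappaEff hB.1) :
    ∀ hC : (A - (c : ℂ) • (1 : Matrix (Fin n) (Fin n) ℂ)).IsHermitian,
      mu (n - r + 1) (A - (c : ℂ) • (1 : Matrix (Fin n) (Fin n) ℂ)) ≥
        -(kappaEff hB.1 - 1) * lambdaMin hC ∧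
      ((A - (c : ℂ) • (1 : Matrix (Fin n) (Fin n) ℂ)) ⊙ B).PosSemidef := by
  intro hC
  classical
  set C : Matrix (Fin n) (Fin n) ℂ := A - (c:ℂ) • 1 with hCdef
  have heig0 : ∀ k, 0 ≤ hB.1.eigenvalues k := fun k => hB.eigenvalues_nonneg k
  have hrn : r ≤ n := by
    rw [hr]
    simpa using B.rank_le_card_width
  have hn1 : 1 ≤ n := hr1.trans hrn
  have hmn : n - r + 1 ≤ n := by omega
  -- kappa facts
  obtain ⟨k₀, hk₀⟩ : ∃ k, hB.1.eigenvalues k ≠ 0 := by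
    have hcard : Fintype.card {i // hB.1.eigenvalues i ≠ 0} = r := by
      calc Fintype.card {i // hB.1.eigenvalues i ≠ 0} = B.rank :=
            (hB.1.rank_eq_card_non_zero_eigs).symm
        _ = r := hr.symm
    have hpos : 0 < Fintype.card {i // hB.1.eigenvalues i ≠ 0} := by omega
    obtain ⟨⟨k, hk⟩⟩ := Fintype.card_pos_iff.mp hpos
    exact ⟨k, hk⟩
  have hfinS₀ : {t : ℝ | (∃ i, hB.1.eigenvalues i = t) ∧ 0 < t}.Finite :=
    (Set.finite_range hB.1.eigenvalues).subset (by rintro t ⟨⟨i, hi⟩, -⟩; exact ⟨i, hi⟩)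
  have hneS₀ : {t : ℝ | (∃ i, hB.1.eigenvalues i = t) ∧ 0 < t}.Nonempty :=
    ⟨hB.1.eigenvalues k₀, ⟨k₀, rfl⟩, lt_of_le_of_ne (heig0 k₀) (Ne.symm hk₀)⟩
  have haMem : lambdaMinPos hB.1 ∈ {t : ℝ | (∃ i, hB.1.eigenvalues i = t) ∧ 0 < t} :=
    hneS₀.csInf_mem hfinS₀
  have ha0 : 0 < lambdaMinPos hB.1 := haMem.2
  have hbA : ∀ k, hB.1.eigenvalues k ≤ lambdaMax hB.1 := fun k =>
    le_ciSup (Set.Finite.bddAbove (Set.finite_range hB.1.eigenvalues)) k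
  have halow : ∀ k, hB.1.eigenvalues k ≠ 0 → lambdaMinPos hB.1 ≤ hB.1.eigenvalues k := by
    intro k hk
    exact csInf_le hfinS₀.bddBelow ⟨⟨k, rfl⟩, lt_of_le_of_ne (heig0 k) (Ne.symm hk)⟩
  have hab : lambdaMinPos hB.1 ≤ lambdaMax hB.1 := by
    obtain ⟨⟨i, hi⟩, -⟩ := haMem
    rw [← hi]
    exact hbA i
  have hκdef : kappaEff hB.1 = lambdaMax hB.1 / lambdaMinPos hB.1 := rfl
  have hκ1 : 1 ≤ kappaEff hB.1 := by
    rw [hκdef]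
    exact (one_le_div ha0).mpr hab
  have hκpos : 0 < kappaEff hB.1 := lt_of_lt_of_le one_pos hκ1
  have hck : c * kappaEff hB.1 ≤ mu (n - r + 1) A := by
    calc c * kappaEff hB.1 ≤ (mu (n-r+1) A / kappaEff hB.1) * kappaEff hB.1 :=
          mul_le_mul_of_nonneg_right hc1 hκpos.le
      _ = mu (n-r+1) A := div_mul_cancel₀ _ (ne_of_gt hκpos)
  have hcb : c * lambdaMax hB.1 ≤ mu (n - r + 1) A * lambdaMinPos hB.1 := by
    have h1 := mul_le_mul_of_nonneg_right hck ha0.le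
    rw [hκdef] at h1
    calc c * lambdaMax hB.1 = c * (lambdaMax hB.1 / lambdaMinPos hB.1) * lambdaMinPos hB.1 := by
          field_simp
      _ ≤ mu (n-r+1) A * lambdaMinPos hB.1 := h1
  -- Part 1
  have hmuC : mu (n-r+1) A - c ≤ mu (n-r+1) C := by
    apply le_csInf
    · exact ⟨(hC.submatrix (Fin.castLE hmn)).eigenvalues ⟨0, by omega⟩, Fin.castLE hmn,
        Fin.castLE_injective hmn, hC.submatrix _, ⟨0, by omega⟩, rfl⟩
    · rintro t ⟨f, hf, hherm, i, rfl⟩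
      have heq := hherm.eigenvalues_eq i
      have hunit := evec_unit hherm i
      have hsub : C.submatrix f f = A.submatrix f f - (c:ℂ) • 1 := by
        rw [hCdef]
        exact sub_smul_submatrix A c hf
      have hray := quadform_submatrix_ge_mu hA.1 hf ⇑(hherm.eigenvectorBasis i)
      rw [hunit] at hray
      rw [heq, RCLike.re_to_complex]
      have hmv : C.submatrix f f *ᵥ ⇑(hherm.eigenvectorBasis i)
          = (A.submatrix f f - (c:ℂ) • 1) *ᵥ ⇑(hherm.eigenvectorBasis i) :=
        congrArg (fun M => M *ᵥ ⇑(hherm.eigenvectorBasis i)) hsub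
      rw [hmv, quad_sub_smul (A.submatrix f f) c ⇑(hherm.eigenvectorBasis i), hunit]
      rw [Complex.sub_re, Complex.mul_re]
      simp only [Complex.one_re, Complex.one_im, Complex.ofReal_re, Complex.ofReal_im]
      simp only [Complex.one_re] at hray
      linarith
  have hlminC : -c ≤ lambdaMin hC := by
    have hlam : lambdaMin hC = ⨅ i, hC.eigenvalues i := rfl
    rw [hlam]
    haveI : Nonempty (Fin n) := ⟨⟨0, by omega⟩⟩
    refine le_ciInf fun i => ?_
    have heq := hC.eigenvalues_eq i
    have hunit := evec_unit hC i
    have hpos := hA.re_dotProduct_nonneg ⇑(hC.eigenvectorBasis i)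
    rw [RCLike.re_to_complex] at hpos
    rw [heq, RCLike.re_to_complex]
    have hmv : C *ᵥ ⇑(hC.eigenvectorBasis i) = (A - (c:ℂ) • 1) *ᵥ ⇑(hC.eigenvectorBasis i) :=
      congrArg (fun M => M *ᵥ ⇑(hC.eigenvectorBasis i)) hCdef
    rw [hmv, quad_sub_smul A c ⇑(hC.eigenvectorBasis i), hunit]
    rw [Complex.sub_re, Complex.mul_re]
    simp only [Complex.one_re, Complex.one_im, Complex.ofReal_re, Complex.ofReal_im]
    linarith
  constructor
  · have h1 : -(kappaEff hB.1 - 1) * lambdaMin hC ≤ (kappaEff hB.1 - 1) * c := by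
      nlinarith [hκ1, hlminC]
    have h2 : (kappaEff hB.1 - 1) * c ≤ mu (n-r+1) A - c := by
      nlinarith [hck]
    exact le_trans (h1.trans h2) hmuC
  -- Part 2
  · set U : Matrix (Fin n) (Fin n) ℂ := (hB.1.eigenvectorUnitary : Matrix (Fin n) (Fin n) ℂ)
      with hU
    have hUU : U * star U = 1 := Matrix.mem_unitaryGroup_iff.mp (hB.1.eigenvectorUnitary).2
    have hUU' : star U * U = 1 := Matrix.mem_unitaryGroup_iff'.mp (hB.1.eigenvectorUnitary).2
    have hCBherm : (C ⊙ B).IsHermitian := by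
      have hCh : ∀ i j, star (C j i) = C i j := by
        intro i j
        have hcc := congrFun (congrFun hC i) j
        rw [Matrix.conjTranspose_apply] at hcc
        rw [hCdef]
        exact hcc
      have hBh : ∀ i j, star (B j i) = B i j := by
        intro i j
        have hcc := congrFun (congrFun hB.1 i) j
        rwa [Matrix.conjTranspose_apply] at hcc
      unfold Matrix.IsHermitian
      ext i j
      rw [Matrix.conjTranspose_apply, Matrix.hadamard_apply, Matrix.hadamard_apply, star_mul',
        hCh i j, hBh i j]
    refine Matrix.PosSemidef.of_dotProduct_mulVec_nonneg hCBherm fun x => ?_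
    set μ : ℝ := mu (n - r + 1) A with hμdef
    set u : Fin n → Fin n → ℂ := fun k t => star (U t k) with hu
    set z : Fin n → Fin n → ℂ := fun k => x * u k with hz
    have hexp : dotProduct (star x) ((C ⊙ B) *ᵥ x)
        = ∑ k, ((hB.1.eigenvalues k : ℝ) : ℂ) *
            dotProduct (star (z k)) (C *ᵥ (z k)) :=
      hadamard_expand C B hB.1 x
    -- the shifted congruence matrix
    set G : Matrix (Fin n) (Fin n) ℂ :=
      Matrix.diagonal (star x) * (A - (μ:ℂ) • 1) * Matrix.diagonal x with hG
    have hGquad : ∀ v : Fin n → ℂ, dotProduct (star v) (G *ᵥ v)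
        = dotProduct (star (x*v)) ((A - (μ:ℂ)•1) *ᵥ (x*v)) :=
      fun v => diag_congr x v _
    have hloc : ∀ (φ : Fin (n - r + 1) → Fin n) (v : Fin n → ℂ),
        (∀ s, (∀ j, φ j ≠ s) → v s = 0) →
          0 ≤ (dotProduct (star v) (G *ᵥ v)).re := by
      intro φ v hv
      have hcardle : (Finset.univ.image φ).card ≤ n - r + 1 :=
        le_trans Finset.card_image_le (by simp)
      obtain ⟨t, hsub_t, -, htcard⟩ := Finset.exists_subsuperset_card_eq
        (Finset.subset_univ (Finset.univ.image φ)) hcardle (by simpa using hmn)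
      have hψinj : Function.Injective (t.orderEmbOfFin htcard) :=
        (t.orderEmbOfFin htcard).injective
      have hwsupp : ∀ s, s ∉ Set.range (t.orderEmbOfFin htcard) → (x * v) s = 0 := by
        intro s hs
        have hst : s ∉ t := by
          intro hst
          exact hs (by rw [Finset.range_orderEmbOfFin]; exact hst)
        have hv0 : v s = 0 := hv s (fun j hj =>
          hst (hsub_t (Finset.mem_image.mpr ⟨j, Finset.mem_univ j, hj⟩)))
        simp [Pi.mul_apply, hv0]
      rw [hGquad v, quadform_restrict (A - (μ:ℂ)•1) hψinj (x * v) hwsupp]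
      rw [sub_smul_submatrix A μ hψinj, quad_sub_smul (A.submatrix _ _) μ ((x*v) ∘ _)]
      have hray := quadform_submatrix_ge_mu hA.1 hψinj ((x*v) ∘ (t.orderEmbOfFin htcard))
      rw [Complex.sub_re, Complex.mul_re]
      simp only [Complex.ofReal_re, Complex.ofReal_im]
      have hns := dot_self_re_nonneg ((x*v) ∘ (t.orderEmbOfFin htcard))
      linarith [hray]
    -- complement orthonormal family
    have hcard' : Fintype.card {k // ¬ (hB.1.eigenvalues k ≠ 0)} = n - r := by
      have h1 : Fintype.card {i // hB.1.eigenvalues i ≠ 0} = r := by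
        calc Fintype.card {i // hB.1.eigenvalues i ≠ 0} = B.rank :=
              (hB.1.rank_eq_card_non_zero_eigs).symm
          _ = r := hr.symm
      have h2 := Fintype.card_subtype_compl (fun k : Fin n => hB.1.eigenvalues k ≠ 0)
      rw [h2, h1]
      simp
    set e : Fin (n - r) ≃ {k // ¬ (hB.1.eigenvalues k ≠ 0)} :=
      (Fintype.equivFinOfCardEq hcard').symm with he
    set q : Fin (n - r) → Fin n → ℂ := fun l => u ((e l) : Fin n) with hq
    have hqON : ∀ l l' : Fin (n - r),
        ∑ c', (starRingEnd ℂ) (q l c') * q l' c' = if l = l' then 1 else 0 := by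
      intro l l'
      have h1 : ∑ c', (starRingEnd ℂ) (q l c') * q l' c'
          = (starRingEnd ℂ) ((star U * U) ((e l : Fin n)) ((e l' : Fin n))) := by
        rw [Matrix.mul_apply, map_sum]
        refine Finset.sum_congr rfl fun c' _ => ?_
        rw [Matrix.star_apply, Matrix.star_eq_conjTranspose] at *
        simp only [hq, hu, Matrix.conjTranspose_apply, Complex.star_def, _root_.map_mul,
          Complex.conj_conj]
      rw [h1, hUU', Matrix.one_apply]
      by_cases hll : l = l'
      · subst hll; simp
      · have hne : (e l : Fin n) ≠ (e l' : Fin n) := fun h => hll (e.injective (Subtype.ext h))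
        simp [hne, hll]
    have hcore := core' G q hqON hloc
    -- trace identity
    have htrace : ∑ k, dotProduct (star (u k)) (G *ᵥ (u k)) = ∑ s, G s s := by
      have hexp2 : ∀ k, dotProduct (star (u k)) (G *ᵥ (u k))
          = ∑ s, ∑ t, (starRingEnd ℂ) (u k s) * (G s t * u k t) := by
        intro k
        simp only [dotProduct, Matrix.mulVec, Pi.star_apply, Complex.star_def,
          Finset.mul_sum]
      calc ∑ k, dotProduct (star (u k)) (G *ᵥ (u k))
          = ∑ k, ∑ s, ∑ t, (starRingEnd ℂ) (u k s) * (G s t * u k t) :=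
            Finset.sum_congr rfl fun k _ => hexp2 k
        _ = ∑ s, ∑ k, ∑ t, (starRingEnd ℂ) (u k s) * (G s t * u k t) := Finset.sum_comm
        _ = ∑ s, ∑ t, ∑ k, (starRingEnd ℂ) (u k s) * (G s t * u k t) :=
            Finset.sum_congr rfl fun s _ => Finset.sum_comm
        _ = ∑ s, ∑ t, G s t * ((U * star U) s t) := by
            refine Finset.sum_congr rfl fun s _ => Finset.sum_congr rfl fun t _ => ?_
            rw [Matrix.mul_apply, Finset.mul_sum]
            refine Finset.sum_congr rfl fun k _ => ?_
            simp only [hu, Matrix.star_apply, Matrix.star_eq_conjTranspose,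
              Matrix.conjTranspose_apply, Complex.star_def, Complex.conj_conj]
            ring
        _ = ∑ s, G s s := by
            rw [hUU]
            refine Finset.sum_congr rfl fun s _ => ?_
            have : ∀ t, G s t * ((1 : Matrix (Fin n) (Fin n) ℂ) s t)
                = if s = t then G s t else 0 := by
              intro t
              rw [Matrix.one_apply]
              split <;> simp
            rw [Finset.sum_congr rfl fun t _ => this t, Finset.sum_ite_eq Finset.univ s]
            simp
    -- q-sum as filter sum
    have hqsum : ∑ l, (dotProduct (star (q l)) (G *ᵥ (q l))).re
        = ∑ k ∈ Finset.univ.filter (fun k => ¬ (hB.1.eigenvalues k ≠ 0)),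
            (dotProduct (star (u k)) (G *ᵥ (u k))).re := by
      have hstep : ∀ l, (dotProduct (star (q l)) (G *ᵥ (q l))).re
          = (fun kk : {k // ¬ (hB.1.eigenvalues k ≠ 0)} =>
              (dotProduct (star (u (kk : Fin n))) (G *ᵥ (u (kk : Fin n)))).re) (e l) :=
        fun l => rfl
      calc ∑ l, (dotProduct (star (q l)) (G *ᵥ (q l))).re
          = ∑ l, (fun kk : {k // ¬ (hB.1.eigenvalues k ≠ 0)} =>
              (dotProduct (star (u (kk : Fin n))) (G *ᵥ (u (kk : Fin n)))).re) (e l) :=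
            Finset.sum_congr rfl fun l _ => hstep l
        _ = ∑ kk : {k // ¬ (hB.1.eigenvalues k ≠ 0)},
              (dotProduct (star (u (kk : Fin n))) (G *ᵥ (u (kk : Fin n)))).re :=
            Equiv.sum_comp e (fun kk : {k // ¬ (hB.1.eigenvalues k ≠ 0)} =>
              (dotProduct (star (u (kk : Fin n))) (G *ᵥ (u (kk : Fin n)))).re)
        _ = ∑ k ∈ Finset.univ.filter (fun k => ¬ (hB.1.eigenvalues k ≠ 0)),
              (dotProduct (star (u k)) (G *ᵥ (u k))).re :=
            (Finset.sum_subtype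
              (Finset.univ.filter (fun k => ¬ (hB.1.eigenvalues k ≠ 0)))
              (fun x => by simp)
              (fun k => (dotProduct (star (u k)) (G *ᵥ (u k))).re)).symm
    have hsplit := Finset.sum_filter_add_sum_filter_not Finset.univ
      (fun k => hB.1.eigenvalues k ≠ 0)
      (fun k => (dotProduct (star (u k)) (G *ᵥ (u k))).re)
    have htrre : ∑ k, (dotProduct (star (u k)) (G *ᵥ (u k))).re = (∑ s, G s s).re := by
      rw [← htrace, Complex.re_sum]
    have hKey0 : 0 ≤ ∑ k ∈ Finset.univ.filter (fun k => hB.1.eigenvalues k ≠ 0),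
        (dotProduct (star (u k)) (G *ᵥ (u k))).re := by
      have := hcore
      rw [hqsum] at this
      linarith [hsplit, htrre, this]
    -- rewrite the G-form for each k
    have hGk : ∀ k, (dotProduct (star (u k)) (G *ᵥ (u k))).re
        = (dotProduct (star (z k)) (A *ᵥ (z k))).re
          - μ * (dotProduct (star (z k)) (z k)).re := by
      intro k
      rw [hGquad (u k)]
      have hzk : x * u k = z k := rfl
      rw [hzk, quad_sub_smul A μ (z k), Complex.sub_re, Complex.mul_re]
      simp only [Complex.ofReal_re, Complex.ofReal_im]
      ring
    have hKey : 0 ≤ ∑ k ∈ Finset.univ.filter (fun k => hB.1.eigenvalues k ≠ 0),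
        ((dotProduct (star (z k)) (A *ᵥ (z k))).re
          - μ * (dotProduct (star (z k)) (z k)).re) := by
      rw [← Finset.sum_congr rfl fun k _ => hGk k]
      exact hKey0
    -- final chain
    have hα0 : ∀ k, 0 ≤ (dotProduct (star (z k)) (A *ᵥ (z k))).re := by
      intro k
      have := hA.re_dotProduct_nonneg (z k)
      rwa [RCLike.re_to_complex] at this
    have hn0 : ∀ k, 0 ≤ (dotProduct (star (z k)) (z k)).re :=
      fun k => dot_self_re_nonneg (z k)
    have hre : 0 ≤ (dotProduct (star x) ((C ⊙ B) *ᵥ x)).re := by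
      rw [hexp, Complex.re_sum]
      have hterm : ∀ k, (((hB.1.eigenvalues k : ℝ) : ℂ) *
            dotProduct (star (z k)) (C *ᵥ (z k))).re
          = hB.1.eigenvalues k * ((dotProduct (star (z k)) (A *ᵥ (z k))).re
              - c * (dotProduct (star (z k)) (z k)).re) := by
        intro k
        have hCz : dotProduct (star (z k)) (C *ᵥ (z k))
            = dotProduct (star (z k)) (A *ᵥ (z k))
              - (c:ℂ) * dotProduct (star (z k)) (z k) := by
          rw [hCdef]
          exact quad_sub_smul A c (z k)
        rw [hCz, Complex.mul_re, Complex.ofReal_re, Complex.ofReal_im, Complex.sub_re,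
          Complex.sub_im, Complex.mul_re, Complex.mul_im, Complex.ofReal_re, Complex.ofReal_im]
        ring
      rw [Finset.sum_congr rfl fun k _ => hterm k]
      rw [← Finset.sum_filter_add_sum_filter_not Finset.univ
        (fun k => hB.1.eigenvalues k ≠ 0)]
      have hzero : ∑ k ∈ Finset.univ.filter (fun k => ¬ (hB.1.eigenvalues k ≠ 0)),
          hB.1.eigenvalues k * ((dotProduct (star (z k)) (A *ᵥ (z k))).re
            - c * (dotProduct (star (z k)) (z k)).re) = 0 := by
        refine Finset.sum_eq_zero fun k hk => ?_
        have : hB.1.eigenvalues k = 0 := by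
          have := Finset.mem_filter.mp hk
          tauto
        rw [this, zero_mul]
      rw [hzero, add_zero]
      have h6 : ∀ k ∈ Finset.univ.filter (fun k => hB.1.eigenvalues k ≠ 0),
          lambdaMinPos hB.1 * (dotProduct (star (z k)) (A *ᵥ (z k))).re
            - c * lambdaMax hB.1 * (dotProduct (star (z k)) (z k)).re
          ≤ hB.1.eigenvalues k * ((dotProduct (star (z k)) (A *ᵥ (z k))).re
              - c * (dotProduct (star (z k)) (z k)).re) := by
        intro k hk
        have hkne : hB.1.eigenvalues k ≠ 0 := (Finset.mem_filter.mp hk).2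
        have e1 : lambdaMinPos hB.1 * (dotProduct (star (z k)) (A *ᵥ (z k))).re
            ≤ hB.1.eigenvalues k * (dotProduct (star (z k)) (A *ᵥ (z k))).re :=
          mul_le_mul_of_nonneg_right (halow k hkne) (hα0 k)
        have e2 : hB.1.eigenvalues k * (c * (dotProduct (star (z k)) (z k)).re)
            ≤ lambdaMax hB.1 * (c * (dotProduct (star (z k)) (z k)).re) :=
          mul_le_mul_of_nonneg_right (hbA k) (mul_nonneg hc0.le (hn0 k))
        nlinarith [e1, e2]
      have h7 := Finset.sum_le_sum h6
      have h8 : 0 ≤ ∑ k ∈ Finset.univ.filter (fun k => hB.1.eigenvalues k ≠ 0),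
          (lambdaMinPos hB.1 * (dotProduct (star (z k)) (A *ᵥ (z k))).re
            - c * lambdaMax hB.1 * (dotProduct (star (z k)) (z k)).re) := by
        have hrw : ∀ k ∈ Finset.univ.filter (fun k => hB.1.eigenvalues k ≠ 0),
            lambdaMinPos hB.1 * (dotProduct (star (z k)) (A *ᵥ (z k))).re
              - c * lambdaMax hB.1 * (dotProduct (star (z k)) (z k)).re
            = lambdaMinPos hB.1 * ((dotProduct (star (z k)) (A *ᵥ (z k))).re
                - μ * (dotProduct (star (z k)) (z k)).re)
              + (μ * lambdaMinPos hB.1 - c * lambdaMax hB.1)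
                * (dotProduct (star (z k)) (z k)).re := by
          intro k _
          ring
        rw [Finset.sum_congr rfl hrw, Finset.sum_add_distrib, ← Finset.mul_sum,
          ← Finset.mul_sum]
        have hfac : 0 ≤ μ * lambdaMinPos hB.1 - c * lambdaMax hB.1 := by
          rw [hμdef]
          nlinarith [hcb]
        refine add_nonneg (mul_nonneg ha0.le hKey) (mul_nonneg hfac ?_)
        exact Finset.sum_nonneg fun k _ => hn0 k
      linarith [h7, h8]
    -- imaginary part vanishes
    have him : (dotProduct (star x) ((C ⊙ B) *ᵥ x)).im = 0 := by
      have hst : (starRingEnd ℂ) (dotProduct (star x) ((C ⊙ B) *ᵥ x))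
          = dotProduct (star x) ((C ⊙ B) *ᵥ x) := by
        calc (starRingEnd ℂ) (dotProduct (star x) ((C ⊙ B) *ᵥ x))
            = star (dotProduct (star x) ((C ⊙ B) *ᵥ x)) := rfl
          _ = dotProduct (star ((C ⊙ B) *ᵥ x)) x := by
              rw [Matrix.star_dotProduct, star_star]
          _ = dotProduct (Matrix.vecMul (star x) ((C ⊙ B)ᴴ)) x := by
              rw [Matrix.star_mulVec]
          _ = dotProduct (star x) ((C ⊙ B)ᴴ *ᵥ x) :=
              (Matrix.dotProduct_mulVec _ _ _).symm
          _ = dotProduct (star x) ((C ⊙ B) *ᵥ x) := by rw [hCBherm.eq]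
      exact Complex.conj_eq_iff_im.mp hst
    rw [Complex.le_def]
    refine ⟨?_, ?_⟩
    · simp only [Complex.zero_re]
      exact hre
    · simp only [Complex.zero_im]
      exact him.symm
end Core
end

section
/- Let A = [a_ij], B = [b_ij] be n×n complex positive semidefinite matrices. Then λ_min(A ∘ B) ≥ λ_min(A) · min_{1≤i≤n} b_ii. -/
open Matrix
open scoped Matrix ComplexOrder

private lemma schur {n : ℕ} {A B : Matrix (Fin n) (Fin n) ℂ}
    (hA : A.PosSemidef) (hB : B.PosSemidef) : (A ⊙ B).PosSemidef := by
  open scoped MatrixOrder Matrix.Norms.L2Operator in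
  obtain ⟨C, hC⟩ := CStarAlgebra.nonneg_iff_eq_star_mul_self.mp hB.nonneg
  rw [star_eq_conjTranspose] at hC; subst hC
  refine .of_dotProduct_mulVec_nonneg ?_ ?_
  · ext i j
    simp only [conjTranspose_apply, hadamard_apply, star_mul']
    rw [← conjTranspose_apply, hA.1, ← conjTranspose_apply, (Matrix.isHermitian_conjTranspose_mul_self C), mul_comm]
  · intro x
    have key : star x ⬝ᵥ (A ⊙ (Cᴴ * C)) *ᵥ x
        = ∑ k, star (fun i => C k i * x i) ⬝ᵥ A *ᵥ (fun i => C k i * x i) := by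
      have lhs : star x ⬝ᵥ (A ⊙ (Cᴴ * C)) *ᵥ x
          = ∑ i, ∑ j, ∑ k, star (C k i) * star (x i) * A i j * (C k j * x j) := by
        simp only [dotProduct, mulVec, hadamard_apply, mul_apply, conjTranspose_apply,
          Pi.star_apply, Finset.mul_sum, Finset.sum_mul]
        refine Finset.sum_congr rfl fun i _ => Finset.sum_congr rfl fun j _ =>
          Finset.sum_congr rfl fun k _ => by ring
      have rhs : (∑ k, star (fun i => C k i * x i) ⬝ᵥ A *ᵥ (fun i => C k i * x i))
          = ∑ k, ∑ i, ∑ j, star (C k i) * star (x i) * A i j * (C k j * x j) := by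
        simp only [dotProduct, mulVec, Pi.star_apply, Finset.mul_sum, star_mul']
        refine Finset.sum_congr rfl fun k _ => Finset.sum_congr rfl fun i _ =>
          Finset.sum_congr rfl fun j _ => by ring
      rw [lhs, rhs]
      rw [Finset.sum_congr rfl fun i (_ : i ∈ Finset.univ) => Finset.sum_comm]
      exact Finset.sum_comm
    rw [key]
    exact Finset.sum_nonneg fun k _ => hA.dotProduct_mulVec_nonneg _

private lemma shift_psd {n : ℕ} {A : Matrix (Fin n) (Fin n) ℂ} (h : A.IsHermitian) :
    (A - (((⨅ i, h.eigenvalues i : ℝ) : ℂ) • 1)).PosSemidef := by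
  set c : ℝ := ⨅ i, h.eigenvalues i with hc
  refine .of_dotProduct_mulVec_nonneg ?_ ?_
  · refine h.sub ?_
    unfold IsHermitian
    rw [conjTranspose_smul, conjTranspose_one, Complex.star_def, Complex.conj_ofReal]
  · intro x
    set U : Matrix (Fin n) (Fin n) ℂ := (h.eigenvectorUnitary : Matrix (Fin n) (Fin n) ℂ) with hU
    set y : Fin n → ℂ := star U *ᵥ x with hy
    have hstary : star y = star x ᵥ* U := by
      rw [hy, star_mulVec, star_eq_conjTranspose, conjTranspose_conjTranspose]
    have h1 : star x ⬝ᵥ A *ᵥ x = ∑ i, (h.eigenvalues i : ℂ) * Complex.normSq (y i) := by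
      conv_lhs => rw [h.spectral_theorem, Unitary.conjStarAlgAut_apply]
      rw [← mulVec_mulVec, ← mulVec_mulVec, dotProduct_mulVec, ← hU, ← hstary, ← hy]
      simp only [dotProduct, mulVec_diagonal, Function.comp_apply, Pi.star_apply,
        Complex.star_def]
      refine Finset.sum_congr rfl fun i _ => ?_
      rw [← Complex.mul_conj, mul_left_comm, mul_comm ((starRingEnd ℂ) (y i))]; rfl
    have h2 : star x ⬝ᵥ x = ∑ i, (Complex.normSq (y i) : ℂ) := by
      have : star y ⬝ᵥ y = star x ⬝ᵥ x := by
        rw [hstary, hy, dotProduct_mulVec, vecMul_vecMul,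
          show U * star U = 1 from (mem_unitaryGroup_iff).mp (h.eigenvectorUnitary).2, vecMul_one]
      rw [← this]
      simp only [dotProduct, Pi.star_apply, Complex.star_def]
      exact Finset.sum_congr rfl fun i _ => by rw [← Complex.mul_conj, mul_comm]
    have hle : ∀ i, c ≤ h.eigenvalues i := fun i =>
      ciInf_le (Finite.bddBelow_range _) i
    rw [sub_mulVec, dotProduct_sub, smul_mulVec, one_mulVec, dotProduct_smul, h1, h2,
      smul_eq_mul, Finset.mul_sum]
    rw [← Finset.sum_sub_distrib]
    have : ∀ i : Fin n, (h.eigenvalues i : ℂ) * Complex.normSq (y i) - (c:ℂ) * Complex.normSq (y i)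
        = ((( h.eigenvalues i - c) * Complex.normSq (y i) : ℝ) : ℂ) := by
      intro i; push_cast; ring
    simp_rw [this, ← Complex.ofReal_sum]
    rw [Complex.zero_le_real]
    exact Finset.sum_nonneg fun i _ => mul_nonneg (by linarith [hle i]) (Complex.normSq_nonneg _)

private lemma diag_nonneg' {n : ℕ} {B : Matrix (Fin n) (Fin n) ℂ} (hB : B.PosSemidef)
    (i : Fin n) : 0 ≤ B i i := by
  have := hB.dotProduct_mulVec_nonneg (Pi.single i 1)
  simpa [dotProduct, Pi.single_apply, mulVec] using this

private lemma normsq_basis {n : ℕ} {A : Matrix (Fin n) (Fin n) ℂ} (h : A.IsHermitian)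
    (j : Fin n) : ∑ i, Complex.normSq (h.eigenvectorBasis j i) = 1 := by
  have h1 : ‖h.eigenvectorBasis j‖ = 1 := h.eigenvectorBasis.orthonormal.1 j
  have h2 := EuclideanSpace.norm_eq (h.eigenvectorBasis j)
  rw [h1] at h2
  have h3 := congrArg (· ^ 2) h2.symm
  simp only [one_pow] at h3
  rw [Real.sq_sqrt (Finset.sum_nonneg fun i _ => sq_nonneg _)] at h3
  rw [← h3]
  exact Finset.sum_congr rfl fun i _ => (Complex.sq_norm _).symm

/-- **Classical bound.** For positive semidefinite `A, B`,
`λ_min(A ⊙ B) ≥ λ_min(A) · min_i b_ii`. -/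
theorem stmt_13 {n : ℕ} (A B : Matrix (Fin n) (Fin n) ℂ)
    (hA : A.PosSemidef) (hB : B.PosSemidef) (hAB : (A ⊙ B).IsHermitian) :
    lambdaMin hAB ≥ lambdaMin hA.1 * ⨅ i, (B i i).re := by
  by_cases hn : n = 0
  · subst hn
    have h0 : lambdaMin hAB = 0 := Real.iInf_of_isEmpty _
    have h1 : lambdaMin hA.1 = 0 := Real.iInf_of_isEmpty _
    have h2 : (⨅ i : Fin 0, (B i i).re) = 0 := Real.iInf_of_isEmpty _
    rw [h0, h1, h2, mul_zero]
  · haveI : Nonempty (Fin n) := ⟨⟨0, Nat.pos_of_ne_zero hn⟩⟩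
    set c : ℝ := lambdaMin hA.1 with hcdef
    set β : ℝ := ⨅ i, (B i i).re with hbdef
    have hc0 : 0 ≤ c := Real.iInf_nonneg fun i => hA.eigenvalues_nonneg i
    have hBdiag : ∀ i, 0 ≤ B i i := diag_nonneg' hB
    have hBim : ∀ i, B i i = ((B i i).re : ℂ) := fun i => by
      have him : (0 : ℂ).im = (B i i).im := (Complex.le_def.mp (hBdiag i)).2
      exact Complex.ext (Complex.ofReal_re _).symm (by simpa using him.symm)
    have hble : ∀ i, β ≤ (B i i).re := fun i => ciInf_le (Finite.bddBelow_range _) i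
    have hM : ((A - (c : ℂ) • 1) ⊙ B).PosSemidef := schur (shift_psd hA.1) hB
    rw [ge_iff_le, lambdaMin]
    refine le_ciInf fun j => ?_
    obtain ⟨v, hnormv, hevv⟩ : ∃ v : Fin n → ℂ, (∑ i, Complex.normSq (v i) = 1) ∧
        hAB.eigenvalues j = (star v ⬝ᵥ (A ⊙ B) *ᵥ v).re :=
      ⟨⇑(hAB.eigenvectorBasis j), normsq_basis hAB j, by
        rw [hAB.eigenvalues_eq j, RCLike.re_to_complex]⟩
    have hdec : A ⊙ B = ((A - (c : ℂ) • 1) ⊙ B)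
        + (((c : ℂ) • (1 : Matrix (Fin n) (Fin n) ℂ)) ⊙ B) := by
      ext i k
      simp only [hadamard_apply, Matrix.add_apply, Matrix.sub_apply, Matrix.smul_apply, one_apply, smul_eq_mul]
      ring
    have hQ1 : 0 ≤ (star v ⬝ᵥ ((A - (c : ℂ) • 1) ⊙ B) *ᵥ v).re := by
      simpa using (Complex.le_def.mp (hM.dotProduct_mulVec_nonneg v)).1
    have hQ2 : star v ⬝ᵥ (((c : ℂ) • (1 : Matrix (Fin n) (Fin n) ℂ)) ⊙ B) *ᵥ v
        = ((∑ i, c * (B i i).re * Complex.normSq (v i) : ℝ) : ℂ) := by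
      simp only [dotProduct, mulVec, hadamard_apply, Matrix.smul_apply, one_apply, smul_eq_mul,
        mul_ite, mul_one, mul_zero, ite_mul, zero_mul, Pi.star_apply, Complex.star_def]
      rw [Complex.ofReal_sum]
      refine Finset.sum_congr rfl fun i _ => ?_
      rw [Finset.sum_eq_single i (fun k _ hk => by simp [Ne.symm hk]) (by simp)]
      simp only [eq_self_iff_true, if_true]
      push_cast
      conv_lhs => rw [hBim i]
      rw [← Complex.mul_conj]
      ring
    have hsplit : hAB.eigenvalues j = (star v ⬝ᵥ ((A - (c : ℂ) • 1) ⊙ B) *ᵥ v).re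
        + ∑ i, c * (B i i).re * Complex.normSq (v i) := by
      rw [hevv]
      conv_lhs => rw [hdec]
      rw [add_mulVec, dotProduct_add, Complex.add_re, hQ2, Complex.ofReal_re]
    calc c * β = c * β * ∑ i, Complex.normSq (v i) := by rw [hnormv, mul_one]
      _ = ∑ i, c * β * Complex.normSq (v i) := Finset.mul_sum _ _ _
      _ ≤ ∑ i, c * (B i i).re * Complex.normSq (v i) := Finset.sum_le_sum fun i _ =>
          mul_le_mul_of_nonneg_right (mul_le_mul_of_nonneg_left (hble i) hc0)
            (Complex.normSq_nonneg _)
      _ ≤ (star v ⬝ᵥ ((A - (c : ℂ) • 1) ⊙ B) *ᵥ v).re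
          + ∑ i, c * (B i i).re * Complex.normSq (v i) := le_add_of_nonneg_left hQ1
      _ = hAB.eigenvalues j := hsplit.symm
end

section
/- Let K, P ≥ 1 with distinct real numbers ω₁, …, ω_K ∈ [−π, π), and let V_P(ω) be the P×K Vandermonde matrix with entries [V_P(ω)]_{p,k} = e^{i(p−1)ω_k}. Then the rank of V_P(ω)* V_P(ω) equals min{P, K}, and every list of min{P, K} distinct columns of V_P(ω)* V_P(ω) is linearly independent (i.e., its Kruskal rank equals min{P, K}). -/
open Matrix
open scoped Matrix ComplexOrder

/-- For distinct `ω₁, …, ω_K ∈ [-π, π)`, the matrix `V_P(ω)* V_P(ω)` has rank `min P K` and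
Kruskal rank `min P K`: every list of `min P K` distinct columns is linearly independent. -/
theorem stmt_17 {K P : ℕ} (hK : 1 ≤ K) (hP : 1 ≤ P) (ω : Fin K → ℝ)
    (hω : ∀ k, ω k ∈ Set.Ico (-Real.pi) Real.pi) (hdist : Function.Injective ω)
    (V : Matrix (Fin P) (Fin K) ℂ)
    (hV : ∀ (p : Fin P) (k : Fin K), V p k = Complex.exp (Complex.I * ((p : ℕ) : ℂ) * (ω k : ℂ))) :
    (Vᴴ * V).rank = min P K ∧
      ∀ s : Finset (Fin K), s.card = min P K →
        LinearIndependent ℂ (fun j : s => fun i : Fin K => (Vᴴ * V) i (j : Fin K)) := by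

  classical
  -- the nodes
  set z : Fin K → ℂ := fun k => Complex.exp (Complex.I * (ω k : ℂ)) with hzdef
  have hVz : ∀ (p : Fin P) (k : Fin K), V p k = z k ^ (p : ℕ) := by
    intro p k
    rw [hV, ← Complex.exp_nat_mul]
    ring_nf
  have hz : Function.Injective z := by
    intro a b hab
    have h2 : Complex.exp (Complex.I * (ω a : ℂ)) = Complex.exp (Complex.I * (ω b : ℂ)) := hab
    rw [Complex.exp_eq_exp_iff_exists_int] at h2
    obtain ⟨n, hn⟩ := h2
    have hn' : (Complex.I) * (ω a : ℂ) = Complex.I * ((ω b : ℂ) + n * (2 * Real.pi)) := by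
      rw [hn]; push_cast; ring
    have hre : (ω a : ℂ) = ((ω b + n * (2 * Real.pi) : ℝ) : ℂ) := by
      have := mul_left_cancel₀ Complex.I_ne_zero hn'
      push_cast
      exact this
    have hreal : ω a = ω b + n * (2 * Real.pi) := by exact_mod_cast hre
    have ha := hω a
    have hb := hω b
    have hpi := Real.pi_pos
    have hn0 : n = 0 := by
      rcases lt_trichotomy n 0 with h | h | h
      · have hn1 : n ≤ -1 := by omega
        have : (n : ℝ) ≤ -1 := by exact_mod_cast hn1
        nlinarith [ha.1, ha.2, hb.1, hb.2]
      · exact h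
      · have : (1 : ℝ) ≤ n := by exact_mod_cast h
        nlinarith [ha.1, ha.2, hb.1, hb.2]
    apply hdist
    rw [hreal, hn0]
    push_cast; ring
  -- key lemma: any ≤ P columns of V are "independent" in the coefficient sense
  have key : ∀ {m : ℕ}, m ≤ P → ∀ f : Fin m → Fin K, Function.Injective f →
      ∀ c : Fin m → ℂ, (∀ p : Fin P, ∑ j, c j * V p (f j) = 0) → c = 0 := by
    intro m hmP f hf c hc
    apply Matrix.eq_zero_of_forall_pow_sum_mul_pow_eq_zero (f := fun j => z (f j))
      (hz.comp hf)
    intro i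
    have := hc (Fin.castLE hmP i)
    simpa only [hVz, Fin.coe_castLE] using this
  -- linear independence of selected columns of V
  have colsLI : ∀ {m : ℕ}, m ≤ P → ∀ f : Fin m → Fin K, Function.Injective f →
      LinearIndependent ℂ (fun j : Fin m => fun p : Fin P => V p (f j)) := by
    intro m hmP f hf
    rw [Fintype.linearIndependent_iff]
    intro c hc j
    have hc' : ∀ p : Fin P, ∑ j, c j * V p (f j) = 0 := by
      intro p
      have := congrFun hc p
      simpa [Finset.sum_apply, mul_comm] using this
    have := key hmP f hf c hc'
    exact congrFun this j
  set m : ℕ := min P K with hm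
  have hmP : m ≤ P := min_le_left _ _
  have hmK : m ≤ K := min_le_right _ _
  constructor
  · -- rank part
    rw [Matrix.rank_conjTranspose_mul_self]
    refine le_antisymm (le_min V.rank_le_height V.rank_le_width) ?_
    rw [Matrix.rank_eq_finrank_span_cols]
    have hf : Function.Injective (Fin.castLE hmK) := Fin.castLE_injective hmK
    have li := colsLI hmP (Fin.castLE hmK) hf
    have hle : Submodule.span ℂ (Set.range fun j : Fin m => fun p : Fin P =>
        V p (Fin.castLE hmK j)) ≤ Submodule.span ℂ (Set.range Vᵀ) := by
      apply Submodule.span_mono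
      rintro _ ⟨j, rfl⟩
      exact ⟨Fin.castLE hmK j, rfl⟩
    calc m = Module.finrank ℂ (Submodule.span ℂ (Set.range fun j : Fin m =>
            fun p : Fin P => V p (Fin.castLE hmK j))) := by
            rw [finrank_span_eq_card li, Fintype.card_fin]
      _ ≤ _ := Submodule.finrank_mono hle
  · -- Kruskal rank part
    intro s hs
    have e : Fin m ≃ s := (finCongr (hm.trans hs.symm)).trans s.equivFin.symm
    rw [← linearIndependent_equiv e]
    set f : Fin m → Fin K := fun j => ((e j : Fin K)) with hfdef
    have hf : Function.Injective f := Subtype.val_injective.comp e.injective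
    rw [Fintype.linearIndependent_iff]
    intro c hc j
    -- define the lifted coefficient vector
    set x : Fin K → ℂ := fun k => ∑ j, if f j = k then c j else 0 with hxdef
    have sumx : ∀ g : Fin K → ℂ, ∑ k, g k * x k = ∑ j, g (f j) * c j := by
      intro g
      simp only [hxdef, Finset.mul_sum, mul_ite, mul_zero]
      rw [Finset.sum_comm]
      simp [Finset.sum_ite_eq]
    have hc' : ∀ i : Fin K, ∑ j, c j * (Vᴴ * V) i (f j) = 0 := by
      intro i
      have := congrFun hc i
      simpa [Finset.sum_apply, mul_comm] using this
    have hBx : (Vᴴ * V) *ᵥ x = 0 := by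
      funext i
      simp only [Matrix.mulVec, dotProduct]
      rw [sumx (fun k => (Vᴴ * V) i k)]
      simp only [Pi.zero_apply]
      rw [← hc' i]
      exact Finset.sum_congr rfl fun j _ => mul_comm _ _
    have hVx : V *ᵥ x = 0 := (Matrix.conjTranspose_mul_self_mulVec_eq_zero V x).mp hBx
    have hc'' : ∀ p : Fin P, ∑ j, c j * V p (f j) = 0 := by
      intro p
      have := congrFun hVx p
      simp only [Matrix.mulVec, dotProduct, Pi.zero_apply] at this
      rw [sumx (fun k => V p k)] at this
      rw [← this]
      exact Finset.sum_congr rfl fun j _ => mul_comm _ _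
    have := key hmP f hf c hc''
    exact congrFun this j
end
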